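/- Let H be a complex Hilbert space and let A, B be positive bounded linear operators on H. Suppose D is a Moore–Penrose inverse of A + B. Then A∘D∘(A+B) = A and (A+B)∘D∘B = B (so A and B are parallel summable), and moreover the parallel sum A∘D∘B is a positive operator. -/

import Mathlib

open ContinuousLinearMap

variable {H : Type*} [NormedAddCommGroup H] [InnerProductSpace ℂ H] [CompleteSpace H]

/-- `X` is a Moore–Penrose inverse of `T`. -/
def IsMPInv (T X : H →L[ℂ] H) : Prop :=
  T ∘L X ∘L T = T ∧ X ∘L T ∘L X = X ∧
    adjoint (T ∘L X) = T ∘L X ∧ adjoint (X ∘L T) = X ∘L T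

local notation "⟪" x ", " y "⟫" => @inner ℂ _ _ x y

/-- A positive operator vanishing on the "quadratic form" at `x` kills `x`. -/
lemma pos_apply_eq_zero (T : H →L[ℂ] H) (hT : T.IsPositive) {x : H}
    (hx : Complex.re ⟪T x, x⟫ = 0) : T x = 0 := by
  have hsa : adjoint T = T := hT.isSelfAdjoint.adjoint_eq
  set c : ℝ := Complex.re ⟪T (T x), T x⟫ with hc
  have hc0 : 0 ≤ c := hT.2 (T x)
  have hTTx : ⟪T (T x), x⟫ = ⟪T x, T x⟫ := by
    rw [← adjoint_inner_right, hsa]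
  have hnorm : ⟪T x, T x⟫ = ((‖T x‖ : ℂ))^2 := by
    rw [inner_self_eq_norm_sq_to_K]; norm_num
  have key : ∀ t : ℝ, 0 ≤ c * t^2 + 2 * t * ‖T x‖^2 := by
    intro t
    have h0 : (0:ℝ) ≤ Complex.re ⟪T (x + (t:ℂ) • T x), x + (t:ℂ) • T x⟫ :=
      hT.2 (x + (t:ℂ) • T x)
    have expand : ⟪T (x + (t:ℂ) • T x), x + (t:ℂ) • T x⟫
        = ⟪T x, x⟫ + (t:ℂ) * ⟪T x, T x⟫ + (t:ℂ) * ⟪T (T x), x⟫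
          + ((t^2 : ℝ) : ℂ) * ⟪T (T x), T x⟫ := by
      simp only [map_add, map_smul, inner_add_left, inner_add_right, inner_smul_left,
        inner_smul_right, Complex.conj_ofReal]
      push_cast
      ring
    rw [expand, hTTx, hnorm] at h0
    have hre : Complex.re (⟪T x, x⟫ + (t:ℂ) * ((‖T x‖:ℂ))^2 + (t:ℂ) * ((‖T x‖:ℂ))^2
        + ((t^2 : ℝ) : ℂ) * ⟪T (T x), T x⟫)
        = 0 + t * ‖T x‖^2 + t * ‖T x‖^2 + t^2 * c := by
      simp only [Complex.add_re, ← Complex.ofReal_pow, Complex.re_ofReal_mul,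
        Complex.ofReal_re, hx, hc]
    rw [hre] at h0
    linarith
  have hd : ‖T x‖^2 = 0 := by
    set d : ℝ := ‖T x‖^2 with hdd
    have h2 : (0:ℝ) ≤ d := sq_nonneg _
    have h3 : (0:ℝ) < c + 1 := by linarith
    have h1 := key (-d / (c + 1))
    have h5 : (0:ℝ) ≤ (c+1)^2 * (c * (-d/(c+1))^2 + 2 * (-d/(c+1)) * d) :=
      mul_nonneg (by positivity) h1
    have h6 : (c+1)^2 * (c * (-d/(c+1))^2 + 2 * (-d/(c+1)) * d)
        = c * d^2 - 2*(c+1)*d^2 := by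
      field_simp
      ring
    rw [h6] at h5
    nlinarith [sq_nonneg d]
  exact norm_eq_zero.mp (pow_eq_zero_iff (two_ne_zero) |>.mp hd)

/-- Positive operators whose sum is M-P invertible are parallel summable, with positive
parallel sum. -/
theorem positive_parallel_summable (A B D : H →L[ℂ] H) (hA : A.IsPositive)
    (hB : B.IsPositive) (hD : IsMPInv (A + B) D) :
    A ∘L D ∘L (A + B) = A ∧ (A + B) ∘L D ∘L B = B ∧ (A ∘L D ∘L B).IsPositive := by
  obtain ⟨h1, h2, h3, h4⟩ := hD
  set S := A + B with hSdef
  have hS : S.IsPositive := hA.add hB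
  have hSsa : adjoint S = S := hS.isSelfAdjoint.adjoint_eq
  -- if S x = 0 then A x = 0 and B x = 0
  have hker : ∀ x, S x = 0 → A x = 0 ∧ B x = 0 := by
    intro x hx
    have hre : Complex.re ⟪A x, x⟫ + Complex.re ⟪B x, x⟫ = 0 := by
      have hsum : ⟪A x, x⟫ + ⟪B x, x⟫ = ⟪S x, x⟫ := by
        rw [hSdef]; simp [inner_add_left]
      have h0 : ⟪A x, x⟫ + ⟪B x, x⟫ = 0 := by rw [hsum, hx, inner_zero_left]
      calc Complex.re ⟪A x, x⟫ + Complex.re ⟪B x, x⟫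
          = Complex.re (⟪A x, x⟫ + ⟪B x, x⟫) := by rw [Complex.add_re]
        _ = 0 := by rw [h0]; simp
    have hApos : (0:ℝ) ≤ Complex.re ⟪A x, x⟫ := hA.re_inner_nonneg_left x
    have hBpos : (0:ℝ) ≤ Complex.re ⟪B x, x⟫ := hB.re_inner_nonneg_left x
    have hAx : Complex.re ⟪A x, x⟫ = 0 := by linarith
    have hBx : Complex.re ⟪B x, x⟫ = 0 := by linarith
    exact ⟨pos_apply_eq_zero A hA hAx, pos_apply_eq_zero B hB hBx⟩
  -- first identity : A ∘ D ∘ S = A (and same for B)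
  have hSDS : ∀ x, S (D (S x)) = S x := fun x => congrFun (congrArg DFunLike.coe h1) x
  have eA : A ∘L D ∘L S = A := by
    ext x
    have hz : S (D (S x) - x) = 0 := by rw [map_sub, hSDS, sub_self]
    have := (hker _ hz).1
    rw [map_sub, sub_eq_zero] at this
    simpa using this
  have eB : B ∘L D ∘L S = B := by
    ext x
    have hz : S (D (S x) - x) = 0 := by rw [map_sub, hSDS, sub_self]
    have := (hker _ hz).2
    rw [map_sub, sub_eq_zero] at this
    simpa using this
  -- adjoint trick : S ∘ S ∘ D = S
  have hSSD : ∀ x, S (S (D x)) = S x := by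
    have hcomp : S ∘L (S ∘L D) = S := by
      have h1' := congrArg adjoint h1
      rw [show S ∘L D ∘L S = (S ∘L D) ∘L S by rw [comp_assoc]] at h1'
      rw [adjoint_comp, h3, hSsa] at h1'
      exact h1'
    intro x
    exact congrFun (congrArg DFunLike.coe hcomp) x
  have eA' : A ∘L (S ∘L D) = A := by
    ext x
    have hz : S (S (D x) - x) = 0 := by rw [map_sub, hSSD, sub_self]
    have := (hker _ hz).1
    rw [map_sub, sub_eq_zero] at this
    simpa using this
  have eB' : B ∘L (S ∘L D) = B := by
    ext x
    have hz : S (S (D x) - x) = 0 := by rw [map_sub, hSSD, sub_self]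
    have := (hker _ hz).2
    rw [map_sub, sub_eq_zero] at this
    simpa using this
  -- second identity : S ∘ D ∘ B = B
  have eSDB : S ∘L D ∘L B = B := by
    have hBsa : adjoint B = B := hB.isSelfAdjoint.adjoint_eq
    have := congrArg adjoint eB'
    rwa [adjoint_comp, h3, hBsa, comp_assoc] at this
  refine ⟨by simpa [← hSdef] using eA, by simpa [← hSdef] using eSDB, ?_⟩
  -- positivity of the parallel sum
  rw [isPositive_iff_complex]
  intro x
  set u := D (B x) with hu
  have hSu : S u = B x := by
    have := congrFun (congrArg DFunLike.coe eSDB) x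
    simpa using this
  have hAu : A u = B (x - u) := by
    have hsum : A u + B u = B x := by
      have := hSu; rw [hSdef] at this; simpa using this
    rw [map_sub]
    exact eq_sub_iff_add_eq.mpr hsum
  have hval : ⟪(A ∘L D ∘L B) x, x⟫ = ⟪A u, u⟫ + ⟪B (x - u), x - u⟫ := by
    have happ : (A ∘L D ∘L B) x = A u := by simp [hu]
    rw [happ]
    calc ⟪A u, x⟫ = ⟪A u, u⟫ + ⟪A u, x - u⟫ := by
          rw [← inner_add_right]
          congr 1
          abel
        _ = ⟪A u, u⟫ + ⟪B (x - u), x - u⟫ := by rw [hAu]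
  have hreal : ∀ (T : H →L[ℂ] H), T.IsPositive → ∀ y : H,
      (Complex.re ⟪T y, y⟫ : ℂ) = ⟪T y, y⟫ ∧ 0 ≤ Complex.re ⟪T y, y⟫ := by
    intro T hT y
    refine ⟨?_, hT.re_inner_nonneg_left y⟩
    have hsa : adjoint T = T := hT.isSelfAdjoint.adjoint_eq
    have hsym : ⟪y, T y⟫ = ⟪T y, y⟫ := by
      nth_rewrite 1 [← hsa]
      rw [adjoint_inner_right]
    have hconj : (starRingEnd ℂ) ⟪T y, y⟫ = ⟪T y, y⟫ := by
      rw [inner_conj_symm, hsym]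
    exact (Complex.conj_eq_iff_re.mp hconj)
  obtain ⟨hA1, hA2⟩ := hreal A hA u
  obtain ⟨hB1, hB2⟩ := hreal B hB (x - u)
  constructor
  · show (Complex.re ⟪(A ∘L D ∘L B) x, x⟫ : ℂ) = ⟪(A ∘L D ∘L B) x, x⟫
    rw [hval, Complex.add_re]
    push_cast
    rw [hA1, hB1]
  · show (0:ℝ) ≤ Complex.re ⟪(A ∘L D ∘L B) x, x⟫
    rw [hval, Complex.add_re]
    exact add_nonneg hA2 hB2
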